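/- For every d ≥ 1 there exist constants ε ∈ (0,1] and c ≥ 1, depending only on d, with the following property: for every linear subspace U ⊆ ℝ^d and all linear maps A, B : ℝ^d → ℝ^d with ‖A − Id‖ < ε and ‖B − Id‖ < ε (operator norm), the orthogonal projections onto the image subspaces A(U) and B(U) satisfy ‖π_{A(U)} − π_{B(U)}‖ ≤ c · ‖A − B‖. -/

import Mathlib

open RealInnerProductSpace
set_option synthInstance.maxHeartbeats 1000000
set_option maxHeartbeats 1000000

/-- The orthogonal projection onto a subspace, as an endomorphism of the ambient space. -/
noncomputable def projL (d : ℕ) (W : Submodule ℝ (EuclideanSpace ℝ (Fin d))) :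
    EuclideanSpace ℝ (Fin d) →L[ℝ] EuclideanSpace ℝ (Fin d) :=
  W.subtypeL.comp (W.orthogonalProjection)

section aux
variable {d : ℕ}

lemma projL_mem (W : Submodule ℝ (EuclideanSpace ℝ (Fin d))) (x : EuclideanSpace ℝ (Fin d)) :
    projL d W x ∈ W := by
  simpa [projL] using (W.orthogonalProjection x).2

lemma projL_min (W : Submodule ℝ (EuclideanSpace ℝ (Fin d))) (x : EuclideanSpace ℝ (Fin d))
    {w : EuclideanSpace ℝ (Fin d)} (hw : w ∈ W) : ‖x - projL d W x‖ ≤ ‖x - w‖ := by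
  have hin : (inner ℝ (x - projL d W x) ( projL d W x - w) : ℝ) = 0 :=
    Submodule.starProjection_inner_eq_zero (K := W) x _ (W.sub_mem (projL_mem W x) hw)
  have hdecomp : x - w = (x - projL d W x) + (projL d W x - w) := by abel
  have hsq : ‖x - w‖ ^ 2 = ‖x - projL d W x‖ ^ 2 + ‖projL d W x - w‖ ^ 2 := by
    rw [hdecomp, norm_add_sq_real, hin]; ring
  nlinarith [norm_nonneg (x - w), norm_nonneg (x - projL d W x), sq_nonneg ‖projL d W x - w‖]

lemma projL_inner_self (W : Submodule ℝ (EuclideanSpace ℝ (Fin d)))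
    (x : EuclideanSpace ℝ (Fin d)) : (inner ℝ (projL d W x) ( x) : ℝ) = ‖projL d W x‖ ^ 2 := by
  have hin : (inner ℝ (x - projL d W x) ( projL d W x) : ℝ) = 0 :=
    Submodule.starProjection_inner_eq_zero (K := W) x _ (projL_mem W x)
  have : (inner ℝ (x) ( projL d W x) : ℝ) = (inner ℝ (projL d W x) ( projL d W x) : ℝ) := by
    have := inner_sub_left (𝕜 := ℝ) x (projL d W x) (projL d W x)
    rw [hin] at this; linarith
  rw [real_inner_comm, this, real_inner_self_eq_norm_sq]

lemma projL_norm_le (W : Submodule ℝ (EuclideanSpace ℝ (Fin d)))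
    (x : EuclideanSpace ℝ (Fin d)) : ‖projL d W x‖ ≤ ‖x‖ := by
  have h1 := projL_inner_self W x
  have h2 := real_inner_le_norm (projL d W x) x
  nlinarith [norm_nonneg (projL d W x), norm_nonneg x]

lemma gap_lemma (U : Submodule ℝ (EuclideanSpace ℝ (Fin d)))
    (A B : EuclideanSpace ℝ (Fin d) →L[ℝ] EuclideanSpace ℝ (Fin d))
    (hA : ‖A - ContinuousLinearMap.id ℝ (EuclideanSpace ℝ (Fin d))‖ ≤ 1/2)
    {v : EuclideanSpace ℝ (Fin d)}
    (hv : v ∈ U.map (A : EuclideanSpace ℝ (Fin d) →ₗ[ℝ] EuclideanSpace ℝ (Fin d))) :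
    ‖v - projL d (U.map (B : EuclideanSpace ℝ (Fin d) →ₗ[ℝ] EuclideanSpace ℝ (Fin d))) v‖
      ≤ 2 * ‖A - B‖ * ‖v‖ := by
  obtain ⟨y, hy, rfl⟩ := hv
  have hBy : (B : EuclideanSpace ℝ (Fin d) →ₗ[ℝ] EuclideanSpace ℝ (Fin d)) y ∈
      U.map (B : EuclideanSpace ℝ (Fin d) →ₗ[ℝ] EuclideanSpace ℝ (Fin d)) :=
    Submodule.mem_map_of_mem hy
  have h1 := projL_min (U.map (B : EuclideanSpace ℝ (Fin d) →ₗ[ℝ] EuclideanSpace ℝ (Fin d)))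
    ((A : EuclideanSpace ℝ (Fin d) →ₗ[ℝ] EuclideanSpace ℝ (Fin d)) y) hBy
  have h2 : ‖(A : EuclideanSpace ℝ (Fin d) →ₗ[ℝ] EuclideanSpace ℝ (Fin d)) y -
      (B : EuclideanSpace ℝ (Fin d) →ₗ[ℝ] EuclideanSpace ℝ (Fin d)) y‖ ≤ ‖A - B‖ * ‖y‖ := by
    have := (A - B).le_opNorm y
    simpa using this
  have h3 : ‖y‖ ≤ 2 * ‖A y‖ := by
    have h4 : ‖y - A y‖ ≤ (1/2) * ‖y‖ := by
      have := (A - ContinuousLinearMap.id ℝ (EuclideanSpace ℝ (Fin d))).le_opNorm y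
      simp only [ContinuousLinearMap.sub_apply, ContinuousLinearMap.id_apply] at this
      calc ‖y - A y‖ = ‖A y - y‖ := by rw [norm_sub_rev]
        _ ≤ ‖A - ContinuousLinearMap.id ℝ (EuclideanSpace ℝ (Fin d))‖ * ‖y‖ := this
        _ ≤ (1/2) * ‖y‖ := by
            apply mul_le_mul_of_nonneg_right hA (norm_nonneg y)
    have h5 : ‖y‖ ≤ ‖y - A y‖ + ‖A y‖ := by
      calc ‖y‖ = ‖(y - A y) + A y‖ := by rw [sub_add_cancel]
        _ ≤ ‖y - A y‖ + ‖A y‖ := norm_add_le _ _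
    linarith
  have hAB : (0:ℝ) ≤ ‖A - B‖ := norm_nonneg _
  calc ‖(A : EuclideanSpace ℝ (Fin d) →ₗ[ℝ] EuclideanSpace ℝ (Fin d)) y -
        projL d (U.map (B : EuclideanSpace ℝ (Fin d) →ₗ[ℝ] EuclideanSpace ℝ (Fin d)))
          ((A : EuclideanSpace ℝ (Fin d) →ₗ[ℝ] EuclideanSpace ℝ (Fin d)) y)‖
      ≤ ‖(A : EuclideanSpace ℝ (Fin d) →ₗ[ℝ] EuclideanSpace ℝ (Fin d)) y -
          (B : EuclideanSpace ℝ (Fin d) →ₗ[ℝ] EuclideanSpace ℝ (Fin d)) y‖ := h1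
    _ ≤ ‖A - B‖ * ‖y‖ := h2
    _ ≤ ‖A - B‖ * (2 * ‖A y‖) := by
        apply mul_le_mul_of_nonneg_left _ hAB
        simpa using h3
    _ = 2 * ‖A - B‖ * ‖(A : EuclideanSpace ℝ (Fin d) →ₗ[ℝ] EuclideanSpace ℝ (Fin d)) y‖ := by
        simp; ring

end aux

/-- For linear maps `A, B` near the identity, the orthogonal projections
onto `A(U)` and `B(U)` differ by at most `c · ‖A − B‖`. -/
theorem stmt_8 (d : ℕ) (hd : 1 ≤ d) :
    ∃ ε c : ℝ, 0 < ε ∧ ε ≤ 1 ∧ 1 ≤ c ∧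
      ∀ (U : Submodule ℝ (EuclideanSpace ℝ (Fin d)))
        (A B : EuclideanSpace ℝ (Fin d) →L[ℝ] EuclideanSpace ℝ (Fin d)),
        ‖A - ContinuousLinearMap.id ℝ (EuclideanSpace ℝ (Fin d))‖ < ε →
        ‖B - ContinuousLinearMap.id ℝ (EuclideanSpace ℝ (Fin d))‖ < ε →
        ‖projL d (U.map (A : EuclideanSpace ℝ (Fin d) →ₗ[ℝ] EuclideanSpace ℝ (Fin d))) -
            projL d (U.map (B : EuclideanSpace ℝ (Fin d) →ₗ[ℝ] EuclideanSpace ℝ (Fin d)))‖ ≤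
          c * ‖A - B‖ := by
  refine ⟨1/2, 4, by norm_num, by norm_num, by norm_num, ?_⟩
  intro U A B hA hB
  set V := U.map (A : EuclideanSpace ℝ (Fin d) →ₗ[ℝ] EuclideanSpace ℝ (Fin d)) with hV
  set W := U.map (B : EuclideanSpace ℝ (Fin d) →ₗ[ℝ] EuclideanSpace ℝ (Fin d)) with hW
  have hA' : ‖A - ContinuousLinearMap.id ℝ (EuclideanSpace ℝ (Fin d))‖ ≤ 1/2 := le_of_lt hA
  have hB' : ‖B - ContinuousLinearMap.id ℝ (EuclideanSpace ℝ (Fin d))‖ ≤ 1/2 := le_of_lt hB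
  have hδ : (0:ℝ) ≤ ‖A - B‖ := norm_nonneg _
  rw [mul_comm]
  apply ContinuousLinearMap.opNorm_le_bound _ (by positivity)
  intro x
  set q := projL d W x with hq
  set z := x - q with hz
  -- decompose
  have hdec : projL d V x - projL d W x = projL d V z + (projL d V q - q) := by
    have : projL d V x = projL d V z + projL d V q := by
      rw [hz]; rw [map_sub]; abel
    rw [this]; abel
  -- term 2 : ‖projL d V q - q‖ ≤ 2δ‖x‖
  have hqW : q ∈ W := projL_mem W x
  have ht2 : ‖projL d V q - q‖ ≤ 2 * ‖A - B‖ * ‖x‖ := by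
    have hg := gap_lemma U B A hB' (v := q) hqW
    have hqx : ‖q‖ ≤ ‖x‖ := projL_norm_le W x
    calc ‖projL d V q - q‖ = ‖q - projL d V q‖ := norm_sub_rev _ _
      _ ≤ 2 * ‖B - A‖ * ‖q‖ := hg
      _ ≤ 2 * ‖A - B‖ * ‖x‖ := by
          rw [norm_sub_rev B A]
          exact mul_le_mul_of_nonneg_left hqx (by positivity)
  -- term 1
  have ht1 : ‖projL d V z‖ ≤ 2 * ‖A - B‖ * ‖x‖ := by
    set v := projL d V z with hv'
    have hvsq : ‖v‖ ^ 2 = (inner ℝ (v) ( z) : ℝ) := (projL_inner_self V z).symm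
    have hzW : z ∈ Wᗮ := by
      rw [hz, hq]
      exact Submodule.sub_starProjection_mem_orthogonal (K := W) x
    have hQvz : (inner ℝ (projL d W v) ( z) : ℝ) = 0 := by
      have h := hzW (projL d W v) (projL_mem W v)
      exact h
    have hsplit : (inner ℝ (v) ( z) : ℝ) = (inner ℝ (v - projL d W v) ( z) : ℝ) := by
      rw [inner_sub_left, hQvz]; ring
    have hgap : ‖v - projL d W v‖ ≤ 2 * ‖A - B‖ * ‖v‖ :=
      gap_lemma U A B hA' (projL_mem V z)
    have hzx : ‖z‖ ≤ ‖x‖ := by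
      have := projL_min W x (W.zero_mem)
      simpa [hz, hq] using this
    have hkey : ‖v‖ ^ 2 ≤ 2 * ‖A - B‖ * ‖v‖ * ‖z‖ := by
      rw [hvsq, hsplit]
      calc (inner ℝ (v - projL d W v) ( z) : ℝ) ≤ ‖v - projL d W v‖ * ‖z‖ := real_inner_le_norm _ _
        _ ≤ 2 * ‖A - B‖ * ‖v‖ * ‖z‖ :=
            mul_le_mul_of_nonneg_right hgap (norm_nonneg z)
    rcases eq_or_lt_of_le (norm_nonneg v) with h0 | h0
    · rw [← h0]; positivity
    · have : ‖v‖ ≤ 2 * ‖A - B‖ * ‖z‖ := by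
        nlinarith
      calc ‖v‖ ≤ 2 * ‖A - B‖ * ‖z‖ := this
        _ ≤ 2 * ‖A - B‖ * ‖x‖ := by
            apply mul_le_mul_of_nonneg_left hzx (by positivity)
  calc ‖(projL d V - projL d W) x‖ = ‖projL d V z + (projL d V q - q)‖ := by
        rw [ContinuousLinearMap.sub_apply, hdec]
    _ ≤ ‖projL d V z‖ + ‖projL d V q - q‖ := norm_add_le _ _
    _ ≤ 2 * ‖A - B‖ * ‖x‖ + 2 * ‖A - B‖ * ‖x‖ := add_le_add ht1 ht2
    _ = ‖A - B‖ * 4 * ‖x‖ := by ring
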